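/- arXiv:1108.1893 — 7 statements merged into one kernel-verified Lean document; each statement's English description precedes it below -/
import Mathlib

section
/- For all positive integers n, the sum over k from 1 to n of (3k-2)/(k * C(2k,k)) equals 1 - 1/C(2n,n), where C(2k,k) denotes the central binomial coefficient. -/
theorem stmt_0 (n : ℕ) (hn : 1 ≤ n) :
    ∑ k ∈ Finset.Icc 1 n, ((3 * k - 2 : ℚ)) / (k * (Nat.choose (2 * k) k : ℚ))
      = 1 - 1 / (Nat.choose (2 * n) n : ℚ) := by
  induction n, hn using Nat.le_induction with
  | base => norm_num
  | succ n hn ih =>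
    rw [Finset.sum_Icc_succ_top (by omega), ih]
    have h := Nat.succ_mul_centralBinom_succ n
    simp only [Nat.centralBinom] at h
    have h1 : (0:ℚ) < (Nat.choose (2*n) n : ℚ) := by
      exact_mod_cast Nat.choose_pos (by omega)
    have h2 : (0:ℚ) < (Nat.choose (2*(n+1)) (n+1) : ℚ) := by
      exact_mod_cast Nat.choose_pos (by omega)
    have h' : ((n:ℚ)+1) * (Nat.choose (2*(n+1)) (n+1) : ℚ) = 2*(2*n+1) * (Nat.choose (2*n) n : ℚ) := by
      exact_mod_cast h
    have hn1 : ((n:ℚ)+1) ≠ 0 := by positivity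
    push_cast
    field_simp
    nlinarith [h', h1, h2]
end

section
/- For all positive integers n and all values t (in a commutative ring, e.g. rationals), the sum over k from 0 to n of C(n,k)*C(n+k-1,k)/C(2k,k) * (-t)^k equals (-1)^n * v_n(t-2) / 2, where v_n is the Lucas sequence of the second kind: v_0(x)=2, v_1(x)=x, v_n(x)=x*v_{n-1}(x)-v_{n-2}(x). -/
def lucasV (x : ℚ) : ℕ → ℚ
  | 0 => 2
  | 1 => x
  | n + 2 => x * lucasV x (n + 1) - lucasV x n

/-- auxiliary coefficient: `C(n+k-1, 2k-1)` for `k ≥ 1`, and `0` for `k = 0`. -/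
def bcAux (n k : ℕ) : ℕ := if k = 0 then 0 else (n + k - 1).choose (2 * k - 1)

lemma bcAux_zero (n : ℕ) : bcAux n 0 = 0 := rfl

lemma bcAux_succ (n j : ℕ) : bcAux n (j + 1) = (n + j).choose (2 * j + 1) := by
  unfold bcAux
  simp only [Nat.add_eq, if_neg (Nat.succ_ne_zero j)]
  congr 1 <;> omega

/-- the first sum -/
def sumA (t : ℚ) (n : ℕ) : ℚ := ∑ k ∈ Finset.range (n + 1), ((n + k).choose (2 * k) : ℚ) * (-t) ^ k

/-- the second sum -/
def sumG (t : ℚ) (n : ℕ) : ℚ := ∑ k ∈ Finset.range (n + 1), (bcAux n k : ℚ) * (-t) ^ k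

def ekA (n k : ℕ) : ℕ := match k with | 0 => 0 | j + 1 => (n + 1 + j).choose (2 * j)

@[simp] lemma ekA_zero (n : ℕ) : ekA n 0 = 0 := rfl
@[simp] lemma ekA_succ (n j : ℕ) : ekA n (j + 1) = (n + 1 + j).choose (2 * j) := rfl

def ekG (n k : ℕ) : ℕ := match k with | 0 => 0 | j + 1 => bcAux (n + 1) j

@[simp] lemma ekG_zero (n : ℕ) : ekG n 0 = 0 := rfl
@[simp] lemma ekG_succ (n j : ℕ) : ekG n (j + 1) = bcAux (n + 1) j := rfl

lemma pasc2 (a r : ℕ) :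
    (a + 2).choose (r + 2) + a.choose (r + 2) = 2 * (a + 1).choose (r + 2) + a.choose r := by
  have p1 : (a + 2).choose (r + 2) = (a + 1).choose (r + 1) + (a + 1).choose (r + 2) :=
    Nat.choose_succ_succ' (a + 1) (r + 1)
  have p2 : (a + 1).choose (r + 2) = a.choose (r + 1) + a.choose (r + 2) :=
    Nat.choose_succ_succ' a (r + 1)
  have p3 : (a + 1).choose (r + 1) = a.choose r + a.choose (r + 1) :=
    Nat.choose_succ_succ' a r
  omega

lemma pascA (n k : ℕ) :
    (n + 2 + k).choose (2 * k) + (n + k).choose (2 * k)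
      = 2 * ((n + 1 + k).choose (2 * k)) + ekA n k := by
  match k with
  | 0 => simp
  | j + 1 =>
    rw [ekA_succ]
    have e1 : n + 2 + (j + 1) = (n + j + 1) + 2 := by omega
    have e2 : n + (j + 1) = n + j + 1 := by omega
    have e3 : n + 1 + (j + 1) = (n + j + 1) + 1 := by omega
    have e4 : 2 * (j + 1) = 2 * j + 2 := by omega
    have e5 : n + 1 + j = n + j + 1 := by omega
    rw [e4, e1, e3, e2, e5]
    exact pasc2 (n + j + 1) (2 * j)

lemma pascG (n k : ℕ) :
    bcAux (n + 2) k + bcAux n k = 2 * bcAux (n + 1) k + ekG n k := by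
  match k with
  | 0 => simp [bcAux_zero]
  | 1 =>
    rw [ekG_succ, bcAux_succ, bcAux_succ, bcAux_succ, bcAux_zero]
    have e1 : 2 * 0 + 1 = 1 := by omega
    rw [e1]
    simp [Nat.choose_one_right]
    omega
  | (i + 1) + 1 =>
    rw [ekG_succ, bcAux_succ, bcAux_succ, bcAux_succ, bcAux_succ]
    have e1 : n + 2 + (i + 1) = (n + i + 1) + 2 := by omega
    have e2 : n + (i + 1) = n + i + 1 := by omega
    have e3 : n + 1 + (i + 1) = (n + i + 1) + 1 := by omega
    have e4 : 2 * (i + 1) + 1 = (2 * i + 1) + 2 := by omega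
    have e5 : n + 1 + i = n + i + 1 := by omega
    rw [e4, e1, e3, e2, e5]
    exact pasc2 (n + i + 1) (2 * i + 1)

lemma sumA_ext (t : ℚ) (n : ℕ) :
    sumA t (n + 1) = ∑ k ∈ Finset.range (n + 3), ((n + 1 + k).choose (2 * k) : ℚ) * (-t) ^ k := by
  rw [Finset.sum_range_succ]
  have h0 : (n + 1 + (n + 2)).choose (2 * (n + 2)) = 0 :=
    Nat.choose_eq_zero_of_lt (by omega)
  rw [h0]
  simp [sumA]

lemma sumA_ext' (t : ℚ) (n : ℕ) :
    sumA t n = ∑ k ∈ Finset.range (n + 3), ((n + k).choose (2 * k) : ℚ) * (-t) ^ k := by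
  rw [Finset.sum_range_succ, Finset.sum_range_succ]
  have h0 : (n + (n + 2)).choose (2 * (n + 2)) = 0 := Nat.choose_eq_zero_of_lt (by omega)
  have h1 : (n + (n + 1)).choose (2 * (n + 1)) = 0 := Nat.choose_eq_zero_of_lt (by omega)
  rw [h0, h1]
  simp [sumA]

lemma sumG_ext (t : ℚ) (n : ℕ) :
    sumG t (n + 1) = ∑ k ∈ Finset.range (n + 3), (bcAux (n + 1) k : ℚ) * (-t) ^ k := by
  rw [Finset.sum_range_succ]
  have h0 : bcAux (n + 1) (n + 2) = 0 := by
    rw [bcAux_succ]; exact Nat.choose_eq_zero_of_lt (by omega)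
  rw [h0]
  simp [sumG]

lemma sumG_ext' (t : ℚ) (n : ℕ) :
    sumG t n = ∑ k ∈ Finset.range (n + 3), (bcAux n k : ℚ) * (-t) ^ k := by
  rw [Finset.sum_range_succ, Finset.sum_range_succ]
  have h0 : bcAux n (n + 2) = 0 := by
    rw [bcAux_succ]; exact Nat.choose_eq_zero_of_lt (by omega)
  have h1 : bcAux n (n + 1) = 0 := by
    rw [bcAux_succ]; exact Nat.choose_eq_zero_of_lt (by omega)
  rw [h0, h1]
  simp [sumG]

lemma recA (t : ℚ) (n : ℕ) : sumA t (n + 2) = (2 - t) * sumA t (n + 1) - sumA t n := by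
  have key : sumA t (n + 2) + sumA t n = 2 * sumA t (n + 1) + (-t) * sumA t (n + 1) := by
    rw [sumA_ext t n, sumA_ext' t n]
    show (∑ k ∈ Finset.range (n + 3), ((n + 2 + k).choose (2 * k) : ℚ) * (-t) ^ k) + _ = _
    rw [← Finset.sum_add_distrib]
    have step : ∀ k ∈ Finset.range (n + 3),
        ((n + 2 + k).choose (2 * k) : ℚ) * (-t) ^ k + ((n + k).choose (2 * k) : ℚ) * (-t) ^ k
          = 2 * (((n + 1 + k).choose (2 * k) : ℚ) * (-t) ^ k) + (ekA n k : ℚ) * (-t) ^ k := by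
      intro k _
      have := pascA n k
      have hc : ((n + 2 + k).choose (2 * k) : ℚ) + ((n + k).choose (2 * k) : ℚ)
          = 2 * ((n + 1 + k).choose (2 * k) : ℚ) + (ekA n k : ℚ) := by
        exact_mod_cast congrArg (Nat.cast : ℕ → ℚ) this
      calc ((n + 2 + k).choose (2 * k) : ℚ) * (-t) ^ k + ((n + k).choose (2 * k) : ℚ) * (-t) ^ k
          = (((n + 2 + k).choose (2 * k) : ℚ) + ((n + k).choose (2 * k) : ℚ)) * (-t) ^ k := by ring
        _ = _ := by rw [hc]; ring
    rw [Finset.sum_congr rfl step, Finset.sum_add_distrib, ← Finset.mul_sum]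
    congr 1
    rw [Finset.sum_range_succ']
    rw [Finset.sum_range_succ (fun k => (((n + 1 + k).choose (2 * k) : ℚ)) * (-t) ^ k) (n + 2)]
    have h0 : (((n + 1 + (n + 2)).choose (2 * (n + 2)) : ℕ) : ℚ) = 0 := by
      rw [Nat.choose_eq_zero_of_lt (by omega)]; norm_num
    rw [h0]
    simp only [ekA_succ, ekA_zero, Nat.cast_zero, zero_mul, add_zero]
    rw [Finset.mul_sum]
    exact Finset.sum_congr rfl fun j _ => by ring
  linarith [key]

lemma recG (t : ℚ) (n : ℕ) : sumG t (n + 2) = (2 - t) * sumG t (n + 1) - sumG t n := by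
  have key : sumG t (n + 2) + sumG t n = 2 * sumG t (n + 1) + (-t) * sumG t (n + 1) := by
    rw [sumG_ext t n, sumG_ext' t n]
    show (∑ k ∈ Finset.range (n + 3), (bcAux (n + 2) k : ℚ) * (-t) ^ k) + _ = _
    rw [← Finset.sum_add_distrib]
    have step : ∀ k ∈ Finset.range (n + 3),
        (bcAux (n + 2) k : ℚ) * (-t) ^ k + (bcAux n k : ℚ) * (-t) ^ k
          = 2 * ((bcAux (n + 1) k : ℚ) * (-t) ^ k) + (ekG n k : ℚ) * (-t) ^ k := by
      intro k _
      have := pascG n k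
      have hc : (bcAux (n + 2) k : ℚ) + (bcAux n k : ℚ)
          = 2 * (bcAux (n + 1) k : ℚ) + (ekG n k : ℚ) := by
        exact_mod_cast congrArg (Nat.cast : ℕ → ℚ) this
      calc (bcAux (n + 2) k : ℚ) * (-t) ^ k + (bcAux n k : ℚ) * (-t) ^ k
          = ((bcAux (n + 2) k : ℚ) + (bcAux n k : ℚ)) * (-t) ^ k := by ring
        _ = _ := by rw [hc]; ring
    rw [Finset.sum_congr rfl step, Finset.sum_add_distrib, ← Finset.mul_sum]
    congr 1
    rw [Finset.sum_range_succ']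
    rw [Finset.sum_range_succ (fun k => ((bcAux (n + 1) k : ℚ)) * (-t) ^ k) (n + 2)]
    have h0 : ((bcAux (n + 1) (n + 2) : ℕ) : ℚ) = 0 := by
      rw [bcAux_succ, Nat.choose_eq_zero_of_lt (by omega)]; norm_num
    rw [h0]
    simp only [ekG_succ, ekG_zero, Nat.cast_zero, zero_mul, add_zero]
    rw [Finset.mul_sum]
    exact Finset.sum_congr rfl fun j _ => by ring
  linarith [key]

/-- combined sum -/
def sumS (t : ℚ) (n : ℕ) : ℚ := sumA t n - sumG t n / 2

lemma recS (t : ℚ) (n : ℕ) : sumS t (n + 2) = (2 - t) * sumS t (n + 1) - sumS t n := by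
  unfold sumS
  rw [recA, recG]
  ring

lemma lucasV_rec (x : ℚ) (n : ℕ) : lucasV x (n + 2) = x * lucasV x (n + 1) - lucasV x n := rfl

lemma sumS_eq (t : ℚ) : ∀ n : ℕ,
    sumS t (n + 1) = (-1) ^ (n + 1) * lucasV (t - 2) (n + 1) / 2 ∧
    sumS t (n + 2) = (-1) ^ (n + 2) * lucasV (t - 2) (n + 2) / 2 := by
  intro n
  induction n with
  | zero =>
    constructor
    · show sumA t 1 - sumG t 1 / 2 = _
      rw [sumA, sumG]
      simp [Finset.sum_range_succ, bcAux_zero, bcAux_succ, lucasV]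
      norm_num [Nat.choose]
      ring
    · show sumA t 2 - sumG t 2 / 2 = _
      rw [sumA, sumG]
      simp [Finset.sum_range_succ, bcAux_zero, bcAux_succ, lucasV]
      norm_num [Nat.choose]
      ring
  | succ m ih =>
    obtain ⟨h1, h2⟩ := ih
    refine ⟨h2, ?_⟩
    have hrec : lucasV (t - 2) (m + 3) = (t - 2) * lucasV (t - 2) (m + 2) - lucasV (t - 2) (m + 1) :=
      rfl
    have hr : sumS t (m + 3) = (2 - t) * sumS t (m + 2) - sumS t (m + 1) := recS t (m + 1)
    show sumS t (m + 3) = (-1) ^ (m + 3) * lucasV (t - 2) (m + 3) / 2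
    rw [hr, h1, h2, hrec]
    ring

lemma keyterm (m j : ℕ) (hj : j ≤ m) :
    ((m + 1).choose (j + 1) : ℚ) * ((m + j + 1).choose (j + 1) : ℚ)
        / ((2 * (j + 1)).choose (j + 1) : ℚ)
      = ((m + j + 2).choose (2 * (j + 1)) : ℚ) - ((m + j + 1).choose (2 * j + 1) : ℚ) / 2 := by
  have h2j : 2 * (j + 1) = 2 * j + 2 := by ring
  rw [h2j]
  have hpos : (0 : ℚ) < ((2 * j + 2).choose (j + 1) : ℚ) := by
    exact_mod_cast Nat.choose_pos (by omega)
  rw [div_eq_iff (ne_of_gt hpos)]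
  -- nat identities
  have hI1n : (m + j + 2).choose (2 * j + 2) * (2 * j + 2).choose (j + 1)
      = (m + j + 2).choose (j + 1) * (m + 1).choose (j + 1) := by
    have := Nat.choose_mul (n := m + j + 2) (k := 2 * j + 2) (s := j + 1) (by omega)
    have e1 : m + j + 2 - (j + 1) = m + 1 := by omega
    have e2 : 2 * j + 2 - (j + 1) = j + 1 := by omega
    rwa [e1, e2] at this
  have hI2n : (m + j + 1).choose (2 * j + 1) * (2 * j + 1).choose (j + 1)
      = (m + j + 1).choose (j + 1) * m.choose j := by
    have := Nat.choose_mul (n := m + j + 1) (k := 2 * j + 1) (s := j + 1) (by omega)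
    have e1 : m + j + 1 - (j + 1) = m := by omega
    have e2 : 2 * j + 1 - (j + 1) = j := by omega
    rwa [e1, e2] at this
  have hhalf : (2 * j + 2).choose (j + 1) = 2 * (2 * j + 1).choose (j + 1) := by
    have h1 : (2 * j + 2).choose (j + 1) = (2 * j + 1).choose j + (2 * j + 1).choose (j + 1) :=
      Nat.choose_succ_succ (2 * j + 1) j
    have h2 : (2 * j + 1).choose (j + 1) = (2 * j + 1).choose j := Nat.choose_symm_half j
    omega
  have hA : (m + j + 1).choose (j + 1) * (j + 1) = (m + j + 1).choose j * (m + 1) := by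
    have := Nat.choose_mul (n := m + j + 1) (k := j + 1) (s := j) (by omega)
    have e1 : m + j + 1 - j = m + 1 := by omega
    have e2 : j + 1 - j = 1 := by omega
    rw [e1, e2, Nat.choose_one_right, Nat.choose_succ_self_right] at this
    exact this
  have hB : (m + 1) * m.choose j = (m + 1).choose (j + 1) * (j + 1) :=
    Nat.add_one_mul_choose_eq m j
  -- cast to ℚ
  have hI1 : ((m + j + 2).choose (2 * j + 2) : ℚ) * ((2 * j + 2).choose (j + 1) : ℚ)
      = ((m + j + 2).choose (j + 1) : ℚ) * ((m + 1).choose (j + 1) : ℚ) := by exact_mod_cast hI1n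
  have hI2 : ((m + j + 1).choose (2 * j + 1) : ℚ) * ((2 * j + 1).choose (j + 1) : ℚ)
      = ((m + j + 1).choose (j + 1) : ℚ) * (m.choose j : ℚ) := by exact_mod_cast hI2n
  have hhalfq : ((2 * j + 2).choose (j + 1) : ℚ) = 2 * ((2 * j + 1).choose (j + 1) : ℚ) := by
    exact_mod_cast hhalf
  have hAq : ((m + j + 1).choose (j + 1) : ℚ) * ((j : ℚ) + 1)
      = ((m + j + 1).choose j : ℚ) * ((m : ℚ) + 1) := by exact_mod_cast hA
  have hBq : ((m : ℚ) + 1) * (m.choose j : ℚ)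
      = ((m + 1).choose (j + 1) : ℚ) * ((j : ℚ) + 1) := by exact_mod_cast hB
  have hpasc : ((m + j + 2).choose (j + 1) : ℚ)
      = ((m + j + 1).choose j : ℚ) + ((m + j + 1).choose (j + 1) : ℚ) := by
    have : (m + j + 1 + 1).choose (j + 1) = (m + j + 1).choose j + (m + j + 1).choose (j + 1) :=
      Nat.choose_succ_succ (m + j + 1) j
    exact_mod_cast this
  -- I3 in ℚ
  have hne : ((j : ℚ) + 1) * ((m : ℚ) + 1) ≠ 0 := by positivity
  have hI3 : ((m + j + 1).choose (j + 1) : ℚ) * (m.choose j : ℚ)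
      = ((m + j + 1).choose j : ℚ) * ((m + 1).choose (j + 1) : ℚ) := by
    apply mul_right_cancel₀ hne
    calc ((m + j + 1).choose (j + 1) : ℚ) * (m.choose j : ℚ) * (((j : ℚ) + 1) * ((m : ℚ) + 1))
        = (((m + j + 1).choose (j + 1) : ℚ) * ((j : ℚ) + 1)) * (((m : ℚ) + 1) * (m.choose j : ℚ)) := by
          ring
      _ = (((m + j + 1).choose j : ℚ) * ((m : ℚ) + 1)) * (((m + 1).choose (j + 1) : ℚ) * ((j : ℚ) + 1)) := by
          rw [hAq, hBq]
      _ = ((m + j + 1).choose j : ℚ) * ((m + 1).choose (j + 1) : ℚ) * (((j : ℚ) + 1) * ((m : ℚ) + 1)) := by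
          ring
  linear_combination -hI1 + hI2 + ((m + j + 1).choose (2 * j + 1) : ℚ) / 2 * hhalfq
    - ((m + 1).choose (j + 1) : ℚ) * hpasc + hI3

theorem stmt_1 (n : ℕ) (hn : 1 ≤ n) (t : ℚ) :
    ∑ k ∈ Finset.range (n + 1),
        (Nat.choose n k : ℚ) * (Nat.choose (n + k - 1) k : ℚ)
          / (Nat.choose (2 * k) k : ℚ) * (-t) ^ k
      = (-1) ^ n * lucasV (t - 2) n / 2 := by
  obtain ⟨m, rfl⟩ : ∃ m, n = m + 1 := ⟨n - 1, by omega⟩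
  have hS : sumS t (m + 1) = (-1) ^ (m + 1) * lucasV (t - 2) (m + 1) / 2 := (sumS_eq t m).1
  rw [← hS]
  unfold sumS sumA sumG
  rw [Finset.sum_div, ← Finset.sum_sub_distrib]
  apply Finset.sum_congr rfl
  intro k hk
  have hk' : k ≤ m + 1 := by
    have := Finset.mem_range.mp hk; omega
  match k with
  | 0 => simp [bcAux_zero]
  | j + 1 =>
    have hj : j ≤ m := by omega
    have e1 : m + 1 + (j + 1) - 1 = m + j + 1 := by omega
    have e2 : m + 1 + (j + 1) = m + j + 2 := by omega
    rw [e1, e2, bcAux_succ]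
    have e3 : m + 1 + j = m + j + 1 := by omega
    rw [e3]
    rw [keyterm m j hj]
    ring
end

section
/- For every positive integer n, the sum over k from 1 to n of C(n,k)*C(n+k-1,k)/C(2k,k) * (-t)^k / k equals (v_n(2-t) - 2)/(2n) + the sum over k from 1 to n-1 of (v_k(2-t) - 2)/k, as an identity of polynomials in t over ℚ. -/
open Finset

noncomputable def aa (n k : ℕ) : ℚ :=
  if k ≤ n then ((n + k - 1).factorial : ℚ) / ((n - k).factorial * (2 * k).factorial) else 0

lemma aa_of_lt {n k : ℕ} (h : n < k) : aa n k = 0 := by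
  simp [aa, Nat.not_le.mpr h]

lemma fact_ne (m : ℕ) : (m.factorial : ℚ) ≠ 0 := by
  exact_mod_cast (Nat.factorial_ne_zero m)

lemma fact_succ_cast (b : ℕ) : ((b + 1).factorial : ℚ) = ((b : ℚ) + 1) * (b.factorial : ℚ) := by
  rw [Nat.factorial_succ]; push_cast; ring

lemma aa_val2 (n k e1 e2 e3 : ℕ) (h : k ≤ n) (h1 : n + k - 1 = e1) (h2 : n - k = e2)
    (h3 : 2 * k = e3) :
    aa n k = (e1.factorial : ℚ) / (e2.factorial * e3.factorial) := by
  simp only [aa, if_pos h, h1, h2, h3]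

lemma aa_zero (m : ℕ) : aa (m + 1) 0 = 1 / ((m : ℚ) + 1) := by
  rw [aa_val2 (m + 1) 0 m (m + 1) 0 (by omega) (by omega) (by omega) (by omega),
    fact_succ_cast, Nat.factorial_zero]
  have := fact_ne m
  field_simp
  ring

lemma sum_Icc_one (f : ℕ → ℚ) (n : ℕ) :
    ∑ k ∈ Icc 1 n, f k = ∑ i ∈ range n, f (i + 1) := by
  induction n with
  | zero => simp
  | succ m ih =>
      rw [Finset.sum_Icc_succ_top (by omega), Finset.sum_range_succ, ih]

/-- `(n+1-k) a_{n+1,k} = (n+k) a_{n,k}`. -/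
lemma R1 (n k : ℕ) (hk1 : 1 ≤ k) (hk2 : k ≤ n + 1) :
    ((n : ℚ) + 1 - k) * aa (n + 1) k = ((n : ℚ) + k) * aa n k := by
  rcases Nat.lt_or_ge n k with h | h
  · have hk : k = n + 1 := by omega
    subst hk
    rw [show aa n (n + 1) = 0 from aa_of_lt (by omega)]
    push_cast
    ring
  · obtain ⟨j, rfl⟩ : ∃ j, k = j + 1 := ⟨k - 1, by omega⟩
    obtain ⟨d, rfl⟩ : ∃ d, n = j + 1 + d := ⟨n - (j + 1), by omega⟩
    rw [aa_val2 (j + 1 + d + 1) (j + 1) (2 * j + d + 2) (d + 1) (2 * j + 2)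
        (by omega) (by omega) (by omega) (by omega),
      aa_val2 (j + 1 + d) (j + 1) (2 * j + d + 1) d (2 * j + 2)
        (by omega) (by omega) (by omega) (by omega)]
    have F1 : ((2 * j + d + 2).factorial : ℚ)
        = (2 * (j : ℚ) + d + 2) * ((2 * j + d + 1).factorial : ℚ) := by
      rw [show 2 * j + d + 2 = (2 * j + d + 1) + 1 by omega, fact_succ_cast]; push_cast; ring
    have F2 : ((d + 1).factorial : ℚ) = ((d : ℚ) + 1) * (d.factorial : ℚ) := fact_succ_cast d
    rw [F1, F2]
    have h1 := fact_ne d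
    have h2 := fact_ne (2 * j + 2)
    have h3 := fact_ne (2 * j + d + 1)
    push_cast
    field_simp
    ring

/-- three-term recurrence. -/
lemma L1 (n i : ℕ) (hi : i ≤ n + 1) :
    ((n : ℚ) + 2) * aa (n + 2) (i + 1)
      = 2 * ((n : ℚ) + 1) * aa (n + 1) (i + 1) + ((n : ℚ) + 1) * aa (n + 1) i
        - (n : ℚ) * aa n (i + 1) := by
  rcases Nat.lt_or_ge n (i + 1) with h | h
  · rcases Nat.lt_or_ge (n + 1) (i + 1) with h' | h'
    · -- i = n + 1
      have : i = n + 1 := by omega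
      subst this
      rw [show aa (n + 1) (n + 1 + 1) = 0 from aa_of_lt (by omega),
        show aa n (n + 1 + 1) = 0 from aa_of_lt (by omega),
        aa_val2 (n + 2) (n + 1 + 1) (2 * n + 3) 0 (2 * n + 4)
          (by omega) (by omega) (by omega) (by omega),
        aa_val2 (n + 1) (n + 1) (2 * n + 1) 0 (2 * n + 2)
          (by omega) (by omega) (by omega) (by omega)]
      have F1 : ((2 * n + 4).factorial : ℚ)
          = (2 * (n : ℚ) + 4) * (2 * (n : ℚ) + 3) * (2 * (n : ℚ) + 2)
            * ((2 * n + 1).factorial : ℚ) := by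
        rw [show 2 * n + 4 = (2 * n + 3) + 1 by omega, fact_succ_cast,
          show 2 * n + 3 = (2 * n + 2) + 1 by omega, fact_succ_cast,
          show 2 * n + 2 = (2 * n + 1) + 1 by omega, fact_succ_cast]
        push_cast; ring
      have F2 : ((2 * n + 3).factorial : ℚ)
          = (2 * (n : ℚ) + 3) * (2 * (n : ℚ) + 2) * ((2 * n + 1).factorial : ℚ) := by
        rw [show 2 * n + 3 = (2 * n + 2) + 1 by omega, fact_succ_cast,
          show 2 * n + 2 = (2 * n + 1) + 1 by omega, fact_succ_cast]
        push_cast; ring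
      have F3 : ((2 * n + 2).factorial : ℚ)
          = (2 * (n : ℚ) + 2) * ((2 * n + 1).factorial : ℚ) := by
        rw [show 2 * n + 2 = (2 * n + 1) + 1 by omega, fact_succ_cast]; push_cast; ring
      rw [F1, F2, F3, Nat.factorial_zero]
      have h1 := fact_ne (2 * n + 1)
      push_cast
      field_simp
      ring
    · -- i = n
      have hni : n = i := by omega
      subst hni
      rw [show aa n (n + 1) = 0 from aa_of_lt (by omega)]
      rcases n with _ | m
      · rw [aa_val2 2 1 2 1 2 (by omega) (by omega) (by omega) (by omega),
          aa_val2 1 1 1 0 2 (by omega) (by omega) (by omega) (by omega),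
          show aa 1 0 = aa (0 + 1) 0 from rfl, aa_zero 0]
        norm_num [Nat.factorial]
      · rw [aa_val2 (m + 1 + 2) (m + 1 + 1) (2 * m + 4) 1 (2 * m + 4)
            (by omega) (by omega) (by omega) (by omega),
          aa_val2 (m + 1 + 1) (m + 1 + 1) (2 * m + 3) 0 (2 * m + 4)
            (by omega) (by omega) (by omega) (by omega),
          aa_val2 (m + 1 + 1) (m + 1) (2 * m + 2) 1 (2 * m + 2)
            (by omega) (by omega) (by omega) (by omega)]
        have F1 : ((2 * m + 4).factorial : ℚ)
            = (2 * (m : ℚ) + 4) * (2 * (m : ℚ) + 3) * ((2 * m + 2).factorial : ℚ) := by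
          rw [show 2 * m + 4 = (2 * m + 3) + 1 by omega, fact_succ_cast,
            show 2 * m + 3 = (2 * m + 2) + 1 by omega, fact_succ_cast]
          push_cast; ring
        have F2 : ((2 * m + 3).factorial : ℚ)
            = (2 * (m : ℚ) + 3) * ((2 * m + 2).factorial : ℚ) := by
          rw [show 2 * m + 3 = (2 * m + 2) + 1 by omega, fact_succ_cast]; push_cast; ring
        rw [F1, F2, Nat.factorial_zero, Nat.factorial_one]
        have h1 := fact_ne (2 * m + 2)
        push_cast
        field_simp
        ring
  · -- i + 1 ≤ n
    rcases Nat.eq_zero_or_pos i with hi0 | hi0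
    · -- i = 0, n = m + 1
      subst hi0
      obtain ⟨m, rfl⟩ : ∃ m, n = m + 1 := ⟨n - 1, by omega⟩
      rw [show aa (m + 1 + 1) 0 = aa ((m + 1) + 1) 0 from rfl, aa_zero (m + 1),
        aa_val2 (m + 1 + 2) (0 + 1) (m + 3) (m + 2) 2
          (by omega) (by omega) (by omega) (by omega),
        aa_val2 (m + 1 + 1) (0 + 1) (m + 2) (m + 1) 2
          (by omega) (by omega) (by omega) (by omega),
        aa_val2 (m + 1) (0 + 1) (m + 1) m 2
          (by omega) (by omega) (by omega) (by omega)]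
      have F1 : ((m + 3).factorial : ℚ)
          = ((m : ℚ) + 3) * ((m : ℚ) + 2) * ((m : ℚ) + 1) * (m.factorial : ℚ) := by
        rw [show m + 3 = (m + 2) + 1 by omega, fact_succ_cast,
          show m + 2 = (m + 1) + 1 by omega, fact_succ_cast, fact_succ_cast]
        push_cast; ring
      have F2 : ((m + 2).factorial : ℚ)
          = ((m : ℚ) + 2) * ((m : ℚ) + 1) * (m.factorial : ℚ) := by
        rw [show m + 2 = (m + 1) + 1 by omega, fact_succ_cast, fact_succ_cast]
        push_cast; ring
      have F3 : ((m + 1).factorial : ℚ) = ((m : ℚ) + 1) * (m.factorial : ℚ) :=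
        fact_succ_cast m
      rw [F1, F2, F3, show (Nat.factorial 2 : ℚ) = 2 by norm_num [Nat.factorial]]
      have h1 := fact_ne m
      push_cast
      field_simp
      ring
    · -- 1 ≤ i, i + 1 ≤ n : n = i + 1 + d
      obtain ⟨d, rfl⟩ : ∃ d, n = i + 1 + d := ⟨n - (i + 1), by omega⟩
      rw [aa_val2 (i + 1 + d + 2) (i + 1) (2 * i + d + 3) (d + 2) (2 * i + 2)
          (by omega) (by omega) (by omega) (by omega),
        aa_val2 (i + 1 + d + 1) (i + 1) (2 * i + d + 2) (d + 1) (2 * i + 2)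
          (by omega) (by omega) (by omega) (by omega),
        aa_val2 (i + 1 + d + 1) i (2 * i + d + 1) (d + 2) (2 * i)
          (by omega) (by omega) (by omega) (by omega),
        aa_val2 (i + 1 + d) (i + 1) (2 * i + d + 1) d (2 * i + 2)
          (by omega) (by omega) (by omega) (by omega)]
      have F1 : ((2 * i + d + 3).factorial : ℚ)
          = (2 * (i : ℚ) + d + 3) * (2 * (i : ℚ) + d + 2) * ((2 * i + d + 1).factorial : ℚ) := by
        rw [show 2 * i + d + 3 = (2 * i + d + 2) + 1 by omega, fact_succ_cast,
          show 2 * i + d + 2 = (2 * i + d + 1) + 1 by omega, fact_succ_cast]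
        push_cast; ring
      have F2 : ((2 * i + d + 2).factorial : ℚ)
          = (2 * (i : ℚ) + d + 2) * ((2 * i + d + 1).factorial : ℚ) := by
        rw [show 2 * i + d + 2 = (2 * i + d + 1) + 1 by omega, fact_succ_cast]; push_cast; ring
      have F3 : ((d + 2).factorial : ℚ) = ((d : ℚ) + 2) * ((d : ℚ) + 1) * (d.factorial : ℚ) := by
        rw [show d + 2 = (d + 1) + 1 by omega, fact_succ_cast, fact_succ_cast]; push_cast; ring
      have F4 : ((d + 1).factorial : ℚ) = ((d : ℚ) + 1) * (d.factorial : ℚ) := fact_succ_cast d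
      have F5 : ((2 * i + 2).factorial : ℚ)
          = (2 * (i : ℚ) + 2) * (2 * (i : ℚ) + 1) * ((2 * i).factorial : ℚ) := by
        rw [show 2 * i + 2 = (2 * i + 1) + 1 by omega, fact_succ_cast,
          show 2 * i + 1 = (2 * i) + 1 by omega, fact_succ_cast]
        push_cast; ring
      rw [F1, F2, F3, F4, F5]
      have h1 := fact_ne d
      have h2 := fact_ne (2 * i)
      have h3 := fact_ne (2 * i + d + 1)
      push_cast
      field_simp
      ring

/-- Lucas polynomial expansion. -/
lemma lucas_expand (t : ℚ) (n : ℕ) :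
    lucasV (2 - t) n = 2 + ∑ i ∈ range n, 2 * (n : ℚ) * aa n (i + 1) * (-t) ^ (i + 1) := by
  induction n using Nat.twoStepInduction with
  | zero => simp [lucasV]
  | one =>
      rw [show lucasV (2 - t) 1 = 2 - t from rfl, Finset.sum_range_one,
        aa_val2 1 1 1 0 2 (by omega) (by omega) (by omega) (by omega)]
      norm_num [Nat.factorial]
      ring
  | more n ih1 ih2 =>
      rw [show lucasV (2 - t) (n + 2) = (2 - t) * lucasV (2 - t) (n + 1) - lucasV (2 - t) n
        from rfl, ih1, ih2]
      push_cast
      have key : ∑ i ∈ range (n + 2), 2 * ((n : ℚ) + 2) * aa (n + 2) (i + 1) * (-t) ^ (i + 1)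
          = ∑ i ∈ range (n + 2),
              (4 * ((n : ℚ) + 1) * aa (n + 1) (i + 1) + 2 * ((n : ℚ) + 1) * aa (n + 1) i
                - 2 * (n : ℚ) * aa n (i + 1)) * (-t) ^ (i + 1) := by
        refine Finset.sum_congr rfl fun i hi => ?_
        have hi' : i ≤ n + 1 := by
          have := Finset.mem_range.mp hi; omega
        have hL := L1 n i hi'
        have : 2 * ((n : ℚ) + 2) * aa (n + 2) (i + 1)
            = 4 * ((n : ℚ) + 1) * aa (n + 1) (i + 1) + 2 * ((n : ℚ) + 1) * aa (n + 1) i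
              - 2 * (n : ℚ) * aa n (i + 1) := by linarith
        rw [this]
      have split : ∑ i ∈ range (n + 2),
            (4 * ((n : ℚ) + 1) * aa (n + 1) (i + 1) + 2 * ((n : ℚ) + 1) * aa (n + 1) i
              - 2 * (n : ℚ) * aa n (i + 1)) * (-t) ^ (i + 1)
          = (∑ i ∈ range (n + 2), 4 * ((n : ℚ) + 1) * aa (n + 1) (i + 1) * (-t) ^ (i + 1))
            + (∑ i ∈ range (n + 2), 2 * ((n : ℚ) + 1) * aa (n + 1) i * (-t) ^ (i + 1))
            - (∑ i ∈ range (n + 2), 2 * (n : ℚ) * aa n (i + 1) * (-t) ^ (i + 1)) := by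
        rw [← Finset.sum_add_distrib, ← Finset.sum_sub_distrib]
        refine Finset.sum_congr rfl fun i _ => by ring
      have T1 : (∑ i ∈ range (n + 2), 4 * ((n : ℚ) + 1) * aa (n + 1) (i + 1) * (-t) ^ (i + 1))
          = 2 * ∑ i ∈ range (n + 1), 2 * ((n : ℚ) + 1) * aa (n + 1) (i + 1) * (-t) ^ (i + 1) := by
        rw [Finset.sum_range_succ, show aa (n + 1) (n + 1 + 1) = 0 from aa_of_lt (by omega),
          Finset.mul_sum]
        simp only [mul_zero, zero_mul, add_zero]
        refine Finset.sum_congr rfl fun i _ => by ring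
      have T3 : (∑ i ∈ range (n + 2), 2 * (n : ℚ) * aa n (i + 1) * (-t) ^ (i + 1))
          = ∑ i ∈ range n, 2 * (n : ℚ) * aa n (i + 1) * (-t) ^ (i + 1) := by
        rw [Finset.sum_range_succ, Finset.sum_range_succ,
          show aa n (n + 1) = 0 from aa_of_lt (by omega),
          show aa n (n + 1 + 1) = 0 from aa_of_lt (by omega)]
        ring
      have T2 : (∑ i ∈ range (n + 2), 2 * ((n : ℚ) + 1) * aa (n + 1) i * (-t) ^ (i + 1))
          = (-t) * (∑ i ∈ range (n + 1), 2 * ((n : ℚ) + 1) * aa (n + 1) (i + 1) * (-t) ^ (i + 1))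
            + 2 * (-t) := by
        rw [Finset.sum_range_succ' (fun i => 2 * ((n : ℚ) + 1) * aa (n + 1) i * (-t) ^ (i + 1))
          (n + 1), aa_zero n, Finset.mul_sum]
        have hne : (n : ℚ) + 1 ≠ 0 := by positivity
        congr 1
        · refine Finset.sum_congr rfl fun i _ => by ring
        · field_simp
          ring
      rw [key, split, T1, T2, T3]
      ring

lemma lucas_div (t : ℚ) (m : ℕ) (hm : 1 ≤ m) :
    (lucasV (2 - t) m - 2) / (2 * m) = ∑ i ∈ range m, aa m (i + 1) * (-t) ^ (i + 1) := by
  have hm' : (m : ℚ) ≠ 0 := Nat.cast_ne_zero.mpr (by omega)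
  rw [lucas_expand t m,
    show (2 : ℚ) + (∑ i ∈ range m, 2 * (m : ℚ) * aa m (i + 1) * (-t) ^ (i + 1)) - 2
      = ∑ i ∈ range m, 2 * (m : ℚ) * aa m (i + 1) * (-t) ^ (i + 1) by ring,
    Finset.sum_div]
  refine Finset.sum_congr rfl fun i _ => ?_
  field_simp

/-- rewriting the binomial term. -/
lemma cterm (n k : ℕ) (hk1 : 1 ≤ k) (hk2 : k ≤ n) :
    (Nat.choose n k : ℚ) * (Nat.choose (n + k - 1) k : ℚ) / (Nat.choose (2 * k) k : ℚ)
      = (n : ℚ) * aa n k := by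
  obtain ⟨j, rfl⟩ : ∃ j, k = j + 1 := ⟨k - 1, by omega⟩
  obtain ⟨d, rfl⟩ : ∃ d, n = j + 1 + d := ⟨n - (j + 1), by omega⟩
  rw [show (j + 1 + d) + (j + 1) - 1 = 2 * j + d + 1 by omega,
    show 2 * (j + 1) = 2 * j + 2 by omega,
    Nat.cast_choose ℚ (by omega : j + 1 ≤ j + 1 + d),
    Nat.cast_choose ℚ (by omega : j + 1 ≤ 2 * j + d + 1),
    Nat.cast_choose ℚ (by omega : j + 1 ≤ 2 * j + 2),
    aa_val2 (j + 1 + d) (j + 1) (2 * j + d + 1) d (2 * j + 2)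
      (by omega) (by omega) (by omega) (by omega),
    show (j + 1 + d) - (j + 1) = d by omega,
    show (2 * j + d + 1) - (j + 1) = j + d by omega,
    show (2 * j + 2) - (j + 1) = j + 1 by omega,
    show j + 1 + d = (j + d) + 1 by omega, fact_succ_cast]
  have h1 := fact_ne (j + 1)
  have h2 := fact_ne d
  have h3 := fact_ne (j + d)
  have h4 := fact_ne (2 * j + d + 1)
  have h5 := fact_ne (2 * j + 2)
  push_cast
  field_simp

theorem stmt_2 (n : ℕ) (hn : 1 ≤ n) (t : ℚ) :
    ∑ k ∈ Finset.Icc 1 n,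
        (Nat.choose n k : ℚ) * (Nat.choose (n + k - 1) k : ℚ)
          / (Nat.choose (2 * k) k : ℚ) * (-t) ^ k / k
      = (lucasV (2 - t) n - 2) / (2 * n)
        + ∑ k ∈ Finset.Icc 1 (n - 1), (lucasV (2 - t) k - 2) / k := by
  induction n, hn using Nat.le_induction with
  | base =>
      rw [show (1 : ℕ) - 1 = 0 from rfl]
      rw [Finset.Icc_self, Finset.sum_singleton, show Finset.Icc 1 0 = ∅ from rfl,
        Finset.sum_empty, show lucasV (2 - t) 1 = 2 - t from rfl]
      norm_num [Nat.choose]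
      ring
  | succ m hm ih =>
      have hm0 : (m : ℚ) ≠ 0 := Nat.cast_ne_zero.mpr (by omega)
      have hsplit : ∑ k ∈ Finset.Icc 1 (m + 1 - 1), (lucasV (2 - t) k - 2) / k
          = ∑ k ∈ Finset.Icc 1 (m - 1), (lucasV (2 - t) k - 2) / k
            + (lucasV (2 - t) m - 2) / m := by
        obtain ⟨p, rfl⟩ : ∃ p, m = p + 1 := ⟨m - 1, by omega⟩
        rw [show p + 1 + 1 - 1 = p + 1 by omega, show p + 1 - 1 = p by omega,
          Finset.sum_Icc_succ_top (by omega)]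
      rw [hsplit]
      have ihr : ∑ k ∈ Finset.Icc 1 (m - 1), (lucasV (2 - t) k - 2) / k
          = (∑ k ∈ Finset.Icc 1 m,
              (Nat.choose m k : ℚ) * (Nat.choose (m + k - 1) k : ℚ)
                / (Nat.choose (2 * k) k : ℚ) * (-t) ^ k / k)
            - (lucasV (2 - t) m - 2) / (2 * m) := by
        linarith [ih]
      rw [ihr]
      have hD1 := lucas_div t (m + 1) (by omega)
      have hD2 := lucas_div t m hm
      push_cast at hD1
      have hhalf : (lucasV (2 - t) m - 2) / (m : ℚ)
          = 2 * ∑ i ∈ range m, aa m (i + 1) * (-t) ^ (i + 1) := by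
        rw [← hD2]
        field_simp
      push_cast
      rw [hD1, hD2, hhalf]
      rw [sum_Icc_one (fun k => (Nat.choose (m + 1) k : ℚ) * (Nat.choose (m + 1 + k - 1) k : ℚ)
            / (Nat.choose (2 * k) k : ℚ) * (-t) ^ k / k) (m + 1),
        sum_Icc_one (fun k => (Nat.choose m k : ℚ) * (Nat.choose (m + k - 1) k : ℚ)
            / (Nat.choose (2 * k) k : ℚ) * (-t) ^ k / k) m]
      have lhs1 : ∑ i ∈ range (m + 1),
          (Nat.choose (m + 1) (i + 1) : ℚ) * (Nat.choose (m + 1 + (i + 1) - 1) (i + 1) : ℚ)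
            / (Nat.choose (2 * (i + 1)) (i + 1) : ℚ) * (-t) ^ (i + 1) / ((i : ℚ) + 1)
          = ∑ i ∈ range (m + 1),
              ((m : ℚ) + 1) * aa (m + 1) (i + 1) * (-t) ^ (i + 1) / ((i : ℚ) + 1) := by
        refine Finset.sum_congr rfl fun i hi => ?_
        have h' : i + 1 ≤ m + 1 := Finset.mem_range.mp hi
        rw [cterm (m + 1) (i + 1) (by omega) h']
        push_cast
        ring
      have lhs2 : ∑ i ∈ range m,
          (Nat.choose m (i + 1) : ℚ) * (Nat.choose (m + (i + 1) - 1) (i + 1) : ℚ)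
            / (Nat.choose (2 * (i + 1)) (i + 1) : ℚ) * (-t) ^ (i + 1) / ((i : ℚ) + 1)
          = ∑ i ∈ range m, (m : ℚ) * aa m (i + 1) * (-t) ^ (i + 1) / ((i : ℚ) + 1) := by
        refine Finset.sum_congr rfl fun i hi => ?_
        have h' : i + 1 ≤ m := Finset.mem_range.mp hi
        rw [cterm m (i + 1) (by omega) h']
      push_cast
      rw [lhs1, lhs2]
      have ext1 : ∑ i ∈ range m, (m : ℚ) * aa m (i + 1) * (-t) ^ (i + 1) / ((i : ℚ) + 1)
          = ∑ i ∈ range (m + 1), (m : ℚ) * aa m (i + 1) * (-t) ^ (i + 1) / ((i : ℚ) + 1) := by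
        rw [Finset.sum_range_succ, show aa m (m + 1) = 0 from aa_of_lt (by omega)]
        ring
      have ext2 : ∑ i ∈ range m, aa m (i + 1) * (-t) ^ (i + 1)
          = ∑ i ∈ range (m + 1), aa m (i + 1) * (-t) ^ (i + 1) := by
        rw [Finset.sum_range_succ, show aa m (m + 1) = 0 from aa_of_lt (by omega)]
        ring
      rw [ext1, ext2]
      have sums : (∑ i ∈ range (m + 1),
            ((m : ℚ) + 1) * aa (m + 1) (i + 1) * (-t) ^ (i + 1) / ((i : ℚ) + 1))
          - (∑ i ∈ range (m + 1), (m : ℚ) * aa m (i + 1) * (-t) ^ (i + 1) / ((i : ℚ) + 1))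
          = (∑ i ∈ range (m + 1), aa (m + 1) (i + 1) * (-t) ^ (i + 1))
            + (∑ i ∈ range (m + 1), aa m (i + 1) * (-t) ^ (i + 1)) := by
        rw [← Finset.sum_sub_distrib, ← Finset.sum_add_distrib]
        refine Finset.sum_congr rfl fun i hi => ?_
        have hi' : i + 1 ≤ m + 1 := Finset.mem_range.mp hi
        have hr := R1 m (i + 1) (by omega) hi'
        have hk : ((i : ℚ) + 1) ≠ 0 := by positivity
        push_cast at hr
        field_simp
        linear_combination ((-t) ^ (i + 1)) * hr
      linarith [sums]
end

section
/- For every odd prime p and every integer k with 1 ≤ k ≤ p-1, the rational number (-1)^{k-1} * C(p,k) * C(p+k-1,k) equals (p^2/k^2) * the product over m from 1 to k-1 of (1 - p^2/m^2). -/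
theorem stmt_3 (p : ℕ) (hp : p.Prime) (hodd : Odd p) (k : ℕ)
    (hk1 : 1 ≤ k) (hk2 : k ≤ p - 1) :
    ((-1 : ℚ)) ^ (k - 1) * (Nat.choose p k : ℚ) * (Nat.choose (p + k - 1) k : ℚ)
      = ((p : ℚ) ^ 2 / (k : ℚ) ^ 2)
        * ∏ m ∈ Finset.Icc 1 (k - 1), (1 - (p : ℚ) ^ 2 / (m : ℚ) ^ 2) := by
  have hp1 : 1 ≤ p := hp.pos
  revert hk2
  induction k, hk1 using Nat.le_induction with
  | base =>
    intro _
    simp [Nat.choose_one_right]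
    push_cast
    ring
  | succ k hk ih =>
    intro hk2
    have hk2' : k ≤ p - 1 := by omega
    have hkp : k < p := by omega
    have ih' := ih hk2'
    obtain ⟨j, rfl⟩ : ∃ j, k = j + 1 := ⟨k - 1, by omega⟩
    -- key binomial ratio facts
    have hA : ((p.choose (j + 2) : ℚ)) * (j + 2) = (p.choose (j + 1) : ℚ) * ((p : ℚ) - (j + 1)) := by
      have h := Nat.choose_succ_right_eq p (j + 1)
      have h2 : ((p.choose (j + 1 + 1) * (j + 1 + 1) : ℕ) : ℚ)
          = ((p.choose (j + 1) * (p - (j + 1)) : ℕ) : ℚ) := by exact_mod_cast h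
      push_cast [Nat.cast_sub hkp.le] at h2
      push_cast
      linarith [h2]
    have hB : ((p + (j + 1)).choose (j + 2) : ℚ) * (j + 2)
        = ((p : ℚ) + (j + 1)) * ((p + (j + 1) - 1).choose (j + 1) : ℚ) := by
      have h := Nat.add_one_mul_choose_eq (p + (j + 1) - 1) (j + 1)
      have hs : p + (j + 1) - 1 + 1 = p + (j + 1) := by omega
      rw [hs] at h
      have h2 : (((p + (j + 1)) * (p + (j + 1) - 1).choose (j + 1) : ℕ) : ℚ)
          = (((p + (j + 1)).choose (j + 1).succ * (j + 1).succ : ℕ) : ℚ) := by exact_mod_cast h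
      push_cast at h2
      push_cast
      linarith [h2]
    have hsimp1 : p + (j + 1 + 1) - 1 = p + (j + 1) := by omega
    have hsimp2 : j + 1 + 1 - 1 = j + 1 := by omega
    have hsimp3 : j + 1 - 1 = j := by omega
    rw [hsimp1, hsimp2] at *
    rw [hsimp3] at ih'
    rw [Finset.prod_Icc_succ_top (by omega : 1 ≤ j + 1)]
    have hj1 : ((j : ℚ) + 1) ≠ 0 := by positivity
    have hj2 : ((j : ℚ) + 2) ≠ 0 := by positivity
    -- set abbreviations
    set A : ℚ := (p.choose (j + 1) : ℚ) with hAdef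
    set B : ℚ := ((p + (j + 1) - 1).choose (j + 1) : ℚ) with hBdef
    set P : ℚ := ∏ m ∈ Finset.Icc 1 j, (1 - (p : ℚ) ^ 2 / (m : ℚ) ^ 2) with hPdef
    have e1 : ((p.choose (j + 2) : ℚ)) = A * ((p : ℚ) - (j + 1)) / (j + 2) := by
      field_simp
      push_cast at hA ⊢
      linarith [hA]
    have e2 : ((p + (j + 1)).choose (j + 2) : ℚ) = ((p : ℚ) + (j + 1)) * B / (j + 2) := by
      field_simp
      push_cast at hB ⊢
      linarith [hB]
    push_cast
    rw [e1, e2]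
    have hpow : (-1 : ℚ) ^ (j + 1) = -(-1 : ℚ) ^ j := by ring
    rw [hpow]
    have ihs : (-1 : ℚ) ^ j * A * B = (p : ℚ) ^ 2 / ((j : ℚ) + 1) ^ 2 * P := by
      push_cast at ih'
      convert ih' using 2 <;> push_cast <;> ring
    field_simp at ihs ⊢
    linear_combination (-((p:ℚ)-((j:ℚ)+1))*((p:ℚ)+((j:ℚ)+1))*((j:ℚ)+2)^2) * ihs
end

section
/- For every positive integer N, 4*∑_{k=1}^N 1/(k^4 C(2k,k)) = 3*∑_{k=1}^N H_{k-1}(2)/(k^2 C(2k,k)) - 2*∑_{k=1}^N (-1)^k/k^4 + ∑_{k=1}^N (-1)^{N+k} (N-k)! ((k-1)!)^2 H_{k-1}(2) / (N+k)!. -/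
def H2 (n : ℕ) : ℚ := ∑ j ∈ Finset.Icc 1 n, 1 / (j : ℚ) ^ 2

noncomputable section AuxStmt15

def tQ (N k : ℕ) : ℚ :=
  (-1) ^ (N + k) * ((N - k).factorial : ℚ) * (((k - 1).factorial : ℚ)) ^ 2
    / ((N + k).factorial : ℚ)

def sQ (N k : ℕ) : ℚ :=
  (-1) ^ (N + k) * ((N - k).factorial : ℚ) * (((k - 1).factorial : ℚ)) ^ 2
    / ((N + k + 1).factorial : ℚ)

def PsiQ (N k : ℕ) : ℚ :=
  ((N : ℚ) - k + 1) * ((N : ℚ) + k + 1) * sQ N k / ((N : ℚ) + 1) ^ 2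

def GQ (N k : ℕ) : ℚ :=
  ((N : ℚ) - k + 1) * tQ N k / ((N : ℚ) + 1) ^ 2

def zval (N : ℕ) : ℚ :=
  (-1) ^ (N + 1) / ((N : ℚ) + 1) ^ 3
    + (N.factorial : ℚ) ^ 2 / (((N : ℚ) + 1) ^ 2 * ((2 * N + 1).factorial : ℚ))

lemma factQ_ne (n : ℕ) : ((n.factorial : ℚ)) ≠ 0 := by
  exact_mod_cast n.factorial_ne_zero

-- Lemma A : telescoping certificate for Z
lemma lemA (N k : ℕ) (h1 : 1 ≤ k) (h2 : k < N) :
    sQ N k = PsiQ N k - PsiQ N (k + 1) := by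
  obtain ⟨d, rfl⟩ : ∃ d, N = k + 1 + d := ⟨N - (k + 1), by omega⟩
  simp only [sQ, PsiQ]
  have e1 : k + 1 + d - k = d + 1 := by omega
  have e2 : k + 1 + d - (k + 1) = d := by omega
  have e3 : k + 1 + d + k = 2 * k + d + 1 := by omega
  have e4 : k + 1 + d + (k + 1) = 2 * k + d + 2 := by omega
  have e5 : k + 1 - 1 = k := by omega
  rw [e1, e2, e3, e4, e5]
  have hs1 : (-1 : ℚ) ^ (2 * k + d + 1) = -(-1 : ℚ) ^ d := by
    have : 2 * k + d + 1 = 2 * k + (d + 1) := by ring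
    rw [this, pow_add, pow_mul]
    simp [pow_succ]
  have hs2 : (-1 : ℚ) ^ (2 * k + d + 2) = (-1 : ℚ) ^ d := by
    have : 2 * k + d + 2 = 2 * (k + 1) + d := by ring
    rw [this, pow_add, pow_mul]
    simp
  rw [hs1, hs2]
  have f1 : ((d + 1).factorial : ℚ) = (d + 1) * d.factorial := by
    rw [Nat.factorial_succ]; push_cast; ring
  have f2 : (k.factorial : ℚ) = k * (k - 1).factorial := by
    obtain ⟨m, rfl⟩ : ∃ m, k = m + 1 := ⟨k - 1, by omega⟩
    rw [Nat.factorial_succ]; push_cast [Nat.add_sub_cancel]; ring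
  have f3 : ((2 * k + d + 1 + 1).factorial : ℚ)
      = (2 * k + d + 2) * (2 * k + d + 1).factorial := by
    have : 2 * k + d + 1 + 1 = 2 * k + d + 2 := by omega
    rw [this]
    have : 2 * k + d + 2 = (2 * k + d + 1) + 1 := by omega
    rw [this, Nat.factorial_succ]; push_cast; ring
  have f4 : ((2 * k + d + 2 + 1).factorial : ℚ)
      = (2 * k + d + 3) * (2 * k + d + 2) * (2 * k + d + 1).factorial := by
    have : 2 * k + d + 2 + 1 = (2 * k + d + 2) + 1 := by omega
    rw [this, Nat.factorial_succ]
    have : 2 * k + d + 2 = (2 * k + d + 1) + 1 := by omega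
    rw [this, Nat.factorial_succ]; push_cast; ring
  rw [f1, f2, f3, f4]
  have hk : (k : ℚ) ≠ 0 := by positivity
  have hd : ((2 * k + d + 1).factorial : ℚ) ≠ 0 := factQ_ne _
  have h2' : ((2 * k : ℚ) + d + 2) ≠ 0 := by positivity
  have h3' : ((2 * k : ℚ) + d + 3) ≠ 0 := by positivity
  have hN1 : ((k : ℚ) + 1 + d + 1) ≠ 0 := by positivity
  push_cast
  field_simp
  ring

-- Lemma C : tail telescoping certificate
lemma lemC (N k : ℕ) (h1 : 1 ≤ k) (h2 : k < N) :
    sQ N k = GQ N k - GQ N (k + 1) := by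
  obtain ⟨d, rfl⟩ : ∃ d, N = k + 1 + d := ⟨N - (k + 1), by omega⟩
  simp only [sQ, GQ, tQ]
  have e1 : k + 1 + d - k = d + 1 := by omega
  have e2 : k + 1 + d - (k + 1) = d := by omega
  have e3 : k + 1 + d + k = 2 * k + d + 1 := by omega
  have e4 : k + 1 + d + (k + 1) = 2 * k + d + 2 := by omega
  have e5 : k + 1 - 1 = k := by omega
  rw [e1, e2, e3, e4, e5]
  have hs1 : (-1 : ℚ) ^ (2 * k + d + 1) = -(-1 : ℚ) ^ d := by
    have : 2 * k + d + 1 = 2 * k + (d + 1) := by ring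
    rw [this, pow_add, pow_mul]; simp [pow_succ]
  have hs2 : (-1 : ℚ) ^ (2 * k + d + 2) = (-1 : ℚ) ^ d := by
    have : 2 * k + d + 2 = 2 * (k + 1) + d := by ring
    rw [this, pow_add, pow_mul]; simp
  rw [hs1, hs2]
  have f1 : ((d + 1).factorial : ℚ) = (d + 1) * d.factorial := by
    rw [Nat.factorial_succ]; push_cast; ring
  have f2 : (k.factorial : ℚ) = k * (k - 1).factorial := by
    obtain ⟨m, rfl⟩ : ∃ m, k = m + 1 := ⟨k - 1, by omega⟩
    rw [Nat.factorial_succ]; push_cast [Nat.add_sub_cancel]; ring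
  have f3 : ((2 * k + d + 1 + 1).factorial : ℚ)
      = (2 * k + d + 2) * (2 * k + d + 1).factorial := by
    have : 2 * k + d + 1 + 1 = (2 * k + d + 1) + 1 := by omega
    rw [this, Nat.factorial_succ]; push_cast; ring
  have f4 : ((2 * k + d + 2).factorial : ℚ)
      = (2 * k + d + 2) * (2 * k + d + 1).factorial := by
    have : 2 * k + d + 2 = (2 * k + d + 1) + 1 := by omega
    rw [this, Nat.factorial_succ]; push_cast; ring
  simp only [f1, f2, f3, f4]
  have hk : (k : ℚ) ≠ 0 := by positivity
  have hd : ((2 * k + d + 1).factorial : ℚ) ≠ 0 := factQ_ne _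
  have h2' : ((2 * k : ℚ) + d + 2) ≠ 0 := by positivity
  have hN1 : ((k : ℚ) + 1 + d + 1) ≠ 0 := by positivity
  push_cast
  field_simp
  ring


-- Lemma D : the weighted G-term collapses to -sQ/(N+1)^2
lemma lemD (N j : ℕ) (h1 : 1 ≤ j) (h2 : j < N) :
    GQ N (j + 1) / (j : ℚ) ^ 2 = -sQ N j / ((N : ℚ) + 1) ^ 2 := by
  obtain ⟨d, rfl⟩ : ∃ d, N = j + 1 + d := ⟨N - (j + 1), by omega⟩
  simp only [sQ, GQ, tQ]
  have e1 : j + 1 + d - j = d + 1 := by omega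
  have e2 : j + 1 + d - (j + 1) = d := by omega
  have e3 : j + 1 + d + j = 2 * j + d + 1 := by omega
  have e4 : j + 1 + d + (j + 1) = 2 * j + d + 2 := by omega
  have e5 : j + 1 - 1 = j := by omega
  rw [e1, e2, e3, e4, e5]
  have hs1 : (-1 : ℚ) ^ (2 * j + d + 1) = -(-1 : ℚ) ^ d := by
    have : 2 * j + d + 1 = 2 * j + (d + 1) := by ring
    rw [this, pow_add, pow_mul]; simp [pow_succ]
  have hs2 : (-1 : ℚ) ^ (2 * j + d + 2) = (-1 : ℚ) ^ d := by
    have : 2 * j + d + 2 = 2 * (j + 1) + d := by ring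
    rw [this, pow_add, pow_mul]; simp
  rw [hs1, hs2]
  have f1 : ((d + 1).factorial : ℚ) = (d + 1) * d.factorial := by
    rw [Nat.factorial_succ]; push_cast; ring
  have f2 : (j.factorial : ℚ) = j * (j - 1).factorial := by
    obtain ⟨m, rfl⟩ : ∃ m, j = m + 1 := ⟨j - 1, by omega⟩
    rw [Nat.factorial_succ]; push_cast [Nat.add_sub_cancel]; ring
  have f3 : ((2 * j + d + 1 + 1).factorial : ℚ)
      = (2 * j + d + 2) * (2 * j + d + 1).factorial := by
    have : 2 * j + d + 1 + 1 = (2 * j + d + 1) + 1 := by omega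
    rw [this, Nat.factorial_succ]; push_cast; ring
  have f4 : ((2 * j + d + 2).factorial : ℚ)
      = (2 * j + d + 2) * (2 * j + d + 1).factorial := by
    have : 2 * j + d + 2 = (2 * j + d + 1) + 1 := by omega
    rw [this, Nat.factorial_succ]; push_cast; ring
  simp only [f1, f2, f3, f4]
  have hj : (j : ℚ) ≠ 0 := by positivity
  have hd : ((2 * j + d + 1).factorial : ℚ) ≠ 0 := factQ_ne _
  have h2' : ((2 * j : ℚ) + d + 2) ≠ 0 := by positivity
  have hN1 : ((j : ℚ) + 1 + d + 1) ≠ 0 := by positivity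
  push_cast
  field_simp
  ring


-- Lemma B : N-step recurrence for tQ
lemma lemB (N k : ℕ) (h1 : 1 ≤ k) (h2 : k ≤ N) :
    tQ (N + 1) k = tQ N k - (2 * (N : ℚ) + 2) * sQ N k := by
  obtain ⟨d, rfl⟩ : ∃ d, N = k + d := ⟨N - k, by omega⟩
  simp only [sQ, tQ]
  have e1 : k + d - k = d := by omega
  have e2 : k + d + 1 - k = d + 1 := by omega
  have e3 : k + d + k = 2 * k + d := by omega
  have e4 : k + d + 1 + k = 2 * k + d + 1 := by omega
  rw [e1, e2, e3, e4]
  have hs1 : (-1 : ℚ) ^ (2 * k + d + 1) = -(-1 : ℚ) ^ d := by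
    have : 2 * k + d + 1 = 2 * k + (d + 1) := by ring
    rw [this, pow_add, pow_mul]; simp [pow_succ]
  have hs2 : (-1 : ℚ) ^ (2 * k + d) = (-1 : ℚ) ^ d := by
    rw [pow_add, pow_mul]; simp
  rw [hs1, hs2]
  have f1 : ((d + 1).factorial : ℚ) = (d + 1) * d.factorial := by
    rw [Nat.factorial_succ]; push_cast; ring
  have f3 : ((2 * k + d + 1).factorial : ℚ)
      = (2 * k + d + 1) * (2 * k + d).factorial := by
    have : 2 * k + d + 1 = (2 * k + d) + 1 := by omega
    rw [this, Nat.factorial_succ]; push_cast; ring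
  rw [f1, f3]
  have hd : ((2 * k + d).factorial : ℚ) ≠ 0 := factQ_ne _
  have h2' : ((2 * k : ℚ) + d + 1) ≠ 0 := by positivity
  push_cast
  field_simp
  ring

lemma tele (f g : ℕ → ℚ) (a b : ℕ) (hab : a ≤ b)
    (h : ∀ k, a ≤ k → k < b → f k = g k - g (k + 1)) :
    ∑ k ∈ Finset.Ico a b, f k = g a - g b := by
  induction b, hab using Nat.le_induction with
  | base => simp
  | succ b hb ih =>
      rw [Finset.sum_Ico_succ_top hb, ih (fun k hk hk' => h k hk (by omega)),
        h b hb (by omega)]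
      ring

lemma sNN (N : ℕ) (hN : 1 ≤ N) :
    sQ N N = ((N - 1).factorial : ℚ) ^ 2 / ((2 * N + 1).factorial : ℚ) := by
  simp only [sQ]
  have e1 : N - N = 0 := by omega
  have e2 : N + N + 1 = 2 * N + 1 := by omega
  have hs : (-1 : ℚ) ^ (N + N) = 1 := by
    have : N + N = 2 * N := by omega
    rw [this, pow_mul]; norm_num
  rw [e1, e2, hs]
  simp [Nat.factorial_zero]

lemma tNN (N : ℕ) (hN : 1 ≤ N) :
    tQ N N = ((N - 1).factorial : ℚ) ^ 2 / ((2 * N).factorial : ℚ) := by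
  simp only [tQ]
  have e1 : N - N = 0 := by omega
  have e2 : N + N = 2 * N := by omega
  have hs : (-1 : ℚ) ^ (N + N) = 1 := by
    rw [e2, pow_mul]; norm_num
  rw [e1, hs, e2]
  simp [Nat.factorial_zero]

lemma psi1 (N : ℕ) (hN : 1 ≤ N) :
    PsiQ N 1 = (-1 : ℚ) ^ (N + 1) / ((N : ℚ) + 1) ^ 3 := by
  obtain ⟨d, rfl⟩ : ∃ d, N = d + 1 := ⟨N - 1, by omega⟩
  simp only [PsiQ, sQ]
  have e1 : d + 1 - 1 = d := by omega
  have e2 : d + 1 + 1 + 1 = d + 3 := by omega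
  have e3 : d + 1 + 1 = d + 2 := by omega
  rw [e1, e3]
  have f3 : ((d + 1 + 1 + 1).factorial : ℚ)
      = (d + 3) * (d + 2) * (d + 1) * d.factorial := by
    rw [e2]
    have : d + 3 = (d + 2) + 1 := by omega
    rw [this, Nat.factorial_succ]
    have : d + 2 = (d + 1) + 1 := by omega
    rw [this, Nat.factorial_succ, Nat.factorial_succ]
    push_cast; ring
  rw [f3]
  have hd : (d.factorial : ℚ) ≠ 0 := factQ_ne _
  have h1 : ((d : ℚ) + 1) ≠ 0 := by positivity
  have h2 : ((d : ℚ) + 2) ≠ 0 := by positivity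
  have h3 : ((d : ℚ) + 3) ≠ 0 := by positivity
  push_cast
  simp [Nat.factorial_zero]
  field_simp
  ring

lemma psiNN (N : ℕ) (hN : 1 ≤ N) :
    sQ N N - PsiQ N N
      = (N.factorial : ℚ) ^ 2 / (((N : ℚ) + 1) ^ 2 * ((2 * N + 1).factorial : ℚ)) := by
  have hs := sNN N hN
  simp only [PsiQ]
  rw [hs]
  have hf : (N.factorial : ℚ) = N * (N - 1).factorial := by
    obtain ⟨m, rfl⟩ : ∃ m, N = m + 1 := ⟨N - 1, by omega⟩
    rw [Nat.factorial_succ]; push_cast [Nat.add_sub_cancel]; ring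
  rw [hf]
  have hd : (((2 * N + 1).factorial : ℚ)) ≠ 0 := factQ_ne _
  have h1 : ((N : ℚ) + 1) ≠ 0 := by positivity
  field_simp
  ring

lemma Zlem (N : ℕ) (hN : 1 ≤ N) : ∑ k ∈ Finset.Icc 1 N, sQ N k = zval N := by
  have hIcc : Finset.Icc 1 N = Finset.Ico 1 (N + 1) := by
    rw [Finset.Ico_add_one_right_eq_Icc]
  rw [hIcc, Finset.sum_Ico_succ_top hN,
    tele (sQ N) (PsiQ N) 1 N hN (fun k hk hk' => lemA N k hk hk')]
  have := psiNN N hN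
  have := psi1 N hN
  simp only [zval]
  linarith

lemma Ulem (N : ℕ) (hN : 1 ≤ N) :
    ∑ k ∈ Finset.Icc 1 N, sQ N k * H2 (k - 1)
      = (sQ N N - zval N) / ((N : ℚ) + 1) ^ 2
        + (sQ N N - GQ N N) * H2 (N - 1) := by
  have hIcc : ∀ m : ℕ, 1 ≤ m → Finset.Icc 1 (m - 1) = Finset.Ico 1 m := by
    intro m hm
    rw [← Finset.Ico_add_one_right_eq_Icc]
    congr 1
    omega
  have step1 : ∑ k ∈ Finset.Icc 1 N, sQ N k * H2 (k - 1)
      = ∑ k ∈ Finset.Ico 1 (N + 1), ∑ j ∈ Finset.Ico 1 k, sQ N k / (j : ℚ) ^ 2 := by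
    rw [← Finset.Ico_add_one_right_eq_Icc]
    refine Finset.sum_congr rfl fun k hk => ?_
    rw [Finset.mem_Ico] at hk
    rw [H2, hIcc k hk.1, Finset.mul_sum]
    refine Finset.sum_congr rfl fun j _ => ?_
    rw [mul_one_div]
  rw [step1, ← Finset.sum_Ico_Ico_comm' 1 (N + 1) (fun j k => sQ N k / (j : ℚ) ^ 2)]
  have step2 : ∀ j ∈ Finset.Ico 1 N,
      ∑ k ∈ Finset.Ico (j + 1) (N + 1), sQ N k / (j : ℚ) ^ 2
        = -sQ N j / ((N : ℚ) + 1) ^ 2 + (sQ N N - GQ N N) / (j : ℚ) ^ 2 := by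
    intro j hj
    rw [Finset.mem_Ico] at hj
    rw [← Finset.sum_div, Finset.sum_Ico_succ_top (by omega : j + 1 ≤ N),
      tele (sQ N) (GQ N) (j + 1) N (by omega) (fun k hk hk' => lemC N k (by omega) hk')]
    have hD := lemD N j hj.1 hj.2
    linear_combination hD
  rw [Finset.sum_Ico_succ_top hN, Finset.Ico_self, Finset.sum_empty, add_zero,
    Finset.sum_congr rfl step2, Finset.sum_add_distrib]
  have hZ' : ∑ j ∈ Finset.Ico 1 N, sQ N j = zval N - sQ N N := by
    have := Zlem N hN
    rw [← Finset.Ico_add_one_right_eq_Icc, Finset.sum_Ico_succ_top hN] at this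
    linarith
  have e1 : ∑ j ∈ Finset.Ico 1 N, -sQ N j / ((N : ℚ) + 1) ^ 2
      = (sQ N N - zval N) / ((N : ℚ) + 1) ^ 2 := by
    rw [← Finset.sum_div, Finset.sum_neg_distrib, hZ']
    ring_nf
  have e2 : ∑ j ∈ Finset.Ico 1 N, (sQ N N - GQ N N) / (j : ℚ) ^ 2
      = (sQ N N - GQ N N) * H2 (N - 1) := by
    rw [H2, hIcc N hN, Finset.mul_sum]
    refine Finset.sum_congr rfl fun j _ => ?_
    rw [mul_one_div]
  rw [e1, e2]

lemma H2succ (N : ℕ) (hN : 1 ≤ N) : H2 N = H2 (N - 1) + 1 / (N : ℚ) ^ 2 := by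
  have hIcc : Finset.Icc 1 (N - 1) = Finset.Ico 1 N := by
    rw [← Finset.Ico_add_one_right_eq_Icc]; congr 1; omega
  rw [H2, ← Finset.Ico_add_one_right_eq_Icc, Finset.sum_Ico_succ_top hN, H2, hIcc]

lemma key (N : ℕ) (hN : 1 ≤ N) :
    4 * (1 / (((N : ℚ) + 1) ^ 4 * (Nat.choose (2 * (N + 1)) (N + 1) : ℚ)))
      = 3 * (H2 N / (((N : ℚ) + 1) ^ 2 * (Nat.choose (2 * (N + 1)) (N + 1) : ℚ)))
        - 2 * ((-1 : ℚ) ^ (N + 1) / ((N : ℚ) + 1) ^ 4)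
        - (2 * (N : ℚ) + 2) *
            ((sQ N N - zval N) / ((N : ℚ) + 1) ^ 2 + (sQ N N - GQ N N) * H2 (N - 1))
        + (N.factorial : ℚ) ^ 2 * H2 N / (((2 * N + 2).factorial : ℚ)) := by
  have hCval : ((Nat.choose (2 * (N + 1)) (N + 1) : ℕ) : ℚ)
      = ((2 * N + 2).factorial : ℚ) / (((N + 1).factorial : ℚ)) ^ 2 := by
    rw [eq_div_iff (by positivity)]
    have h := Nat.choose_mul_factorial_mul_factorial (show N + 1 ≤ 2 * (N + 1) by omega)
    have e : 2 * (N + 1) - (N + 1) = N + 1 := by omega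
    rw [e] at h
    have e2 : 2 * (N + 1) = 2 * N + 2 := by omega
    rw [e2] at h
    have := congrArg (fun x : ℕ => (x : ℚ)) h
    push_cast at this
    rw [← this]; ring
  have hH : H2 (N - 1) = H2 N - 1 / (N : ℚ) ^ 2 := by
    have := H2succ N hN
    linarith
  simp only [GQ]
  rw [hCval, sNN N hN, tNN N hN, hH, zval]
  have hf2 : (N.factorial : ℚ) = N * (N - 1).factorial := by
    obtain ⟨m, rfl⟩ : ∃ m, N = m + 1 := ⟨N - 1, by omega⟩
    rw [Nat.factorial_succ]; push_cast [Nat.add_sub_cancel]; ring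
  have hf1 : (((N + 1).factorial : ℕ) : ℚ) = ((N : ℚ) + 1) * (N * (N - 1).factorial) := by
    rw [Nat.factorial_succ]; push_cast [hf2]; try ring
  have hf3 : (((2 * N + 1).factorial : ℕ) : ℚ) = (2 * (N : ℚ) + 1) * ((2 * N).factorial : ℚ) := by
    rw [Nat.factorial_succ]; push_cast; try ring
  have hf4 : (((2 * N + 2).factorial : ℕ) : ℚ)
      = (2 * (N : ℚ) + 2) * (2 * (N : ℚ) + 1) * ((2 * N).factorial : ℚ) := by
    have h : 2 * N + 2 = (2 * N + 1) + 1 := by omega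
    rw [h, Nat.factorial_succ]
    push_cast
    rw [hf3]
    try ring
  rw [hf1, hf2, hf3, hf4]
  have hN0 : (N : ℚ) ≠ 0 := by
    have : 0 < N := hN
    positivity
  have hN1 : ((N : ℚ) + 1) ≠ 0 := by positivity
  have hW : (((2 * N).factorial : ℕ) : ℚ) ≠ 0 := factQ_ne _
  have hF : (((N - 1).factorial : ℕ) : ℚ) ≠ 0 := factQ_ne _
  have h21 : (2 * (N : ℚ) + 1) ≠ 0 := by positivity
  have h22 : (2 * (N : ℚ) + 2) ≠ 0 := by positivity
  field_simp
  ring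

theorem stmt_15 (N : ℕ) (hN : 1 ≤ N) :
    4 * ∑ k ∈ Finset.Icc 1 N, 1 / ((k : ℚ) ^ 4 * (Nat.choose (2 * k) k : ℚ))
      = 3 * ∑ k ∈ Finset.Icc 1 N, H2 (k - 1) / ((k : ℚ) ^ 2 * (Nat.choose (2 * k) k : ℚ))
        - 2 * ∑ k ∈ Finset.Icc 1 N, (-1 : ℚ) ^ k / (k : ℚ) ^ 4
        + ∑ k ∈ Finset.Icc 1 N,
            (-1 : ℚ) ^ (N + k) * ((N - k).factorial : ℚ) * (((k - 1).factorial : ℚ)) ^ 2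
              * H2 (k - 1) / ((N + k).factorial : ℚ) := by
  induction N, hN using Nat.le_induction with
  | base =>
    norm_num [Finset.Icc_self, H2, Nat.factorial]
  | succ N hN ih =>
    have h11 : (1 : ℕ) ≤ N + 1 := by omega
    rw [Finset.sum_Icc_succ_top h11, Finset.sum_Icc_succ_top h11,
      Finset.sum_Icc_succ_top h11, Finset.sum_Icc_succ_top h11]
    have hsplit : ∑ k ∈ Finset.Icc 1 N,
        (-1 : ℚ) ^ (N + 1 + k) * (((N + 1) - k).factorial : ℚ)
          * (((k - 1).factorial : ℚ)) ^ 2 * H2 (k - 1) / ((N + 1 + k).factorial : ℚ)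
        = (∑ k ∈ Finset.Icc 1 N,
            (-1 : ℚ) ^ (N + k) * ((N - k).factorial : ℚ)
              * (((k - 1).factorial : ℚ)) ^ 2 * H2 (k - 1) / ((N + k).factorial : ℚ))
          - (2 * (N : ℚ) + 2) * ∑ k ∈ Finset.Icc 1 N, sQ N k * H2 (k - 1) := by
      rw [Finset.mul_sum, ← Finset.sum_sub_distrib]
      refine Finset.sum_congr rfl fun k hk => ?_
      rw [Finset.mem_Icc] at hk
      have hB := lemB N k hk.1 hk.2
      have l1 : (-1 : ℚ) ^ (N + 1 + k) * (((N + 1) - k).factorial : ℚ)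
          * (((k - 1).factorial : ℚ)) ^ 2 * H2 (k - 1) / ((N + 1 + k).factorial : ℚ)
          = tQ (N + 1) k * H2 (k - 1) := by
        simp only [tQ]; ring
      have l2 : (-1 : ℚ) ^ (N + k) * ((N - k).factorial : ℚ)
          * (((k - 1).factorial : ℚ)) ^ 2 * H2 (k - 1) / ((N + k).factorial : ℚ)
          = tQ N k * H2 (k - 1) := by
        simp only [tQ]; ring
      rw [l1, l2, hB]
      ring
    have htop : (-1 : ℚ) ^ (N + 1 + (N + 1)) * (((N + 1) - (N + 1)).factorial : ℚ)
        * ((((N + 1) - 1).factorial : ℚ)) ^ 2 * H2 ((N + 1) - 1)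
          / ((N + 1 + (N + 1)).factorial : ℚ)
        = (N.factorial : ℚ) ^ 2 * H2 N / (((2 * N + 2).factorial : ℚ)) := by
      have e1 : (N + 1) - (N + 1) = 0 := by omega
      have e2 : (N + 1) - 1 = N := by omega
      have e3 : N + 1 + (N + 1) = 2 * N + 2 := by omega
      rw [e1, e2, e3]
      have hs : (-1 : ℚ) ^ (2 * N + 2) = 1 := by
        have : 2 * N + 2 = 2 * (N + 1) := by omega
        rw [this, pow_mul]; norm_num
      rw [hs]
      simp [Nat.factorial_zero]
    rw [hsplit, htop, Ulem N hN]
    have e2 : (N + 1) - 1 = N := by omega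
    rw [e2]
    have hkey := key N hN
    push_cast
    push_cast at hkey ih
    linear_combination ih + hkey
end AuxStmt15
end

section
/- For every positive integer N, ∑_{k=1}^N 1/k^2 = ∑_{k=1}^N (21k-8)/(k^3 C(2k,k)^3) - ∑_{k=1}^N k! ((k-1)!)^3 (N!)^2 (2N+3k) / ((2k)! ((k+N)!)^2). -/
noncomputable def fq (n k : ℕ) : ℚ :=
  (k.factorial : ℚ) * (((k - 1).factorial : ℚ)) ^ 3 * ((n.factorial : ℚ)) ^ 2
    * (2 * n + 3 * k : ℚ) / (((2 * k).factorial : ℚ) * (((k + n).factorial : ℚ)) ^ 2)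

noncomputable def gq (n k : ℕ) : ℚ :=
  (k.factorial : ℚ) ^ 4 * ((n.factorial : ℚ)) ^ 2
    / (((2 * k).factorial : ℚ) * (((k + n + 1).factorial : ℚ)) ^ 2)

lemma fac_pos (m : ℕ) : (0:ℚ) < (m.factorial : ℚ) := by
  exact_mod_cast m.factorial_pos

lemma wz (N j : ℕ) :
    fq (N + 1) (j + 1) - fq N (j + 1) = gq N (j + 1) - gq N j := by
  have e1 : (2 * (j + 1)).factorial = (2*j+2) * ((2*j+1) * (2*j).factorial) := by
    rw [show 2 * (j + 1) = (2*j+1)+1 by ring, Nat.factorial_succ, Nat.factorial_succ]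
  have e2 : (j + 1 + (N + 1)).factorial = (j+N+2) * (j+N+1).factorial := by
    rw [show j + 1 + (N + 1) = (j+N+1)+1 by ring, Nat.factorial_succ]
  have e3 : (j + 1 + N).factorial = (j+N+1).factorial := by ring_nf
  have e4 : (N + 1).factorial = (N+1) * N.factorial := by rw [Nat.factorial_succ]
  have e5 : (j + 1).factorial = (j+1) * j.factorial := by rw [Nat.factorial_succ]
  have e6 : (j + 1 + N + 1).factorial = (j+N+2) * (j+N+1).factorial := by
    rw [show j + 1 + N + 1 = (j+N+1)+1 by ring, Nat.factorial_succ]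
  have e7 : (j + 1 - 1) = j := by omega
  simp only [fq, gq, e1, e2, e3, e4, e5, e6, e7]
  have ha := fac_pos j
  have hb := fac_pos (2*j)
  have hc := fac_pos (j+N+1)
  have hd := fac_pos N
  push_cast
  have h1 : ((2:ℚ)*j+2) ≠ 0 := by positivity
  have h2 : ((2:ℚ)*j+1) ≠ 0 := by positivity
  have h3 : ((j:ℚ)+N+2) ≠ 0 := by positivity
  field_simp
  ring

lemma g_zero (N : ℕ) : gq N 0 = 1 / ((N:ℚ) + 1) ^ 2 := by
  have e4 : (0 + N + 1).factorial = (N+1) * N.factorial := by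
    rw [show 0 + N + 1 = N+1 by ring, Nat.factorial_succ]
  simp only [gq, e4, Nat.mul_zero, Nat.factorial_zero]
  have hd := fac_pos N
  push_cast
  have h1 : ((N:ℚ)+1) ≠ 0 := by positivity
  field_simp

lemma key_s17 (N : ℕ) :
    (21 * ((N:ℚ)+1) - 8) / (((N:ℚ)+1) ^ 3 * (Nat.choose (2 * (N+1)) (N+1) : ℚ) ^ 3)
      = fq (N+1) (N+1) + gq N N := by
  have hC : ((2 * (N+1)).choose (N+1) : ℚ) * (((N+1).factorial : ℚ))^2
      = ((2 * (N+1)).factorial : ℚ) := by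
    have := Nat.choose_mul_factorial_mul_factorial (show N+1 ≤ 2*(N+1) by omega)
    rw [show 2*(N+1) - (N+1) = N+1 by omega] at this
    push_cast [← this]
    ring
  have e1 : (2 * (N + 1)).factorial = (2*N+2) * ((2*N+1) * (2*N).factorial) := by
    rw [show 2 * (N + 1) = (2*N+1)+1 by ring, Nat.factorial_succ, Nat.factorial_succ]
  have e2 : (N + 1 + (N + 1)).factorial = (2*N+2) * ((2*N+1) * (2*N).factorial) := by
    rw [show N + 1 + (N + 1) = (2*N+1)+1 by ring, Nat.factorial_succ, Nat.factorial_succ]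
  have e3 : (N + N + 1).factorial = (2*N+1) * (2*N).factorial := by
    rw [show N + N + 1 = (2*N)+1 by ring, Nat.factorial_succ]
  have e4 : (N + 1).factorial = (N+1) * N.factorial := by rw [Nat.factorial_succ]
  have e5 : (N + 1 - 1) = N := by omega
  have hq : (0:ℚ) < ((2 * (N+1)).choose (N+1) : ℚ) := by
    exact_mod_cast Nat.choose_pos (show N+1 ≤ 2*(N+1) by omega)
  rw [e1, e4] at hC
  simp only [fq, gq, e1, e2, e3, e4, e5]
  have hd := fac_pos N
  have hb := fac_pos (2*N)
  push_cast at hC ⊢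
  have h1 : ((N:ℚ)+1) ≠ 0 := by positivity
  have h2 : ((2:ℚ)*N+1) ≠ 0 := by positivity
  have h3 : ((2:ℚ)*N+2) ≠ 0 := by positivity
  have hqv : ((2 * (N+1)).choose (N+1) : ℚ)
      = (2*N+2) * ((2*N+1) * (2*N).factorial) / (((N:ℚ)+1) * N.factorial)^2 := by
    rw [eq_div_iff (by positivity)]
    exact_mod_cast hC
  rw [hqv]
  field_simp
  ring

theorem stmt_17 (N : ℕ) (hN : 1 ≤ N) :
    ∑ k ∈ Finset.Icc 1 N, 1 / (k : ℚ) ^ 2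
      = ∑ k ∈ Finset.Icc 1 N, (21 * k - 8 : ℚ) / ((k : ℚ) ^ 3 * (Nat.choose (2 * k) k : ℚ) ^ 3)
        - ∑ k ∈ Finset.Icc 1 N,
            (k.factorial : ℚ) * (((k - 1).factorial : ℚ)) ^ 3 * ((N.factorial : ℚ)) ^ 2
              * (2 * N + 3 * k : ℚ)
              / (((2 * k).factorial : ℚ) * (((k + N).factorial : ℚ)) ^ 2) := by
  induction N, hN using Nat.le_induction with
  | base => norm_num [Nat.factorial]
  | succ N hN ih =>
    have hsucc : ∀ (F : ℕ → ℚ), ∑ k ∈ Finset.Icc 1 (N+1), F k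
        = (∑ k ∈ Finset.Icc 1 N, F k) + F (N+1) := by
      intro F
      rw [← Finset.Ico_add_one_right_eq_Icc, Finset.sum_Ico_succ_top (by omega), Finset.Ico_add_one_right_eq_Icc]
    rw [hsucc, hsucc, hsucc]
    have hfN1 : ∑ k ∈ Finset.Icc 1 N,
        ((k.factorial : ℚ) * (((k - 1).factorial : ℚ)) ^ 3 * (((N+1).factorial : ℚ)) ^ 2
          * (2 * (N+1) + 3 * k : ℚ)
          / (((2 * k).factorial : ℚ) * (((k + (N+1)).factorial : ℚ)) ^ 2))
        = (∑ k ∈ Finset.Icc 1 N, fq N k) + (gq N N - gq N 0) := by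
      have : ∀ k ∈ Finset.Icc 1 N,
          ((k.factorial : ℚ) * (((k - 1).factorial : ℚ)) ^ 3 * (((N+1).factorial : ℚ)) ^ 2
            * (2 * (N+1) + 3 * k : ℚ)
            / (((2 * k).factorial : ℚ) * (((k + (N+1)).factorial : ℚ)) ^ 2))
          = fq N k + (gq N k - gq N (k-1)) := by
        intro k hk
        simp only [Finset.mem_Icc] at hk
        obtain ⟨j, rfl⟩ : ∃ j, k = j + 1 := ⟨k - 1, by omega⟩
        have := wz N j
        simp only [fq] at this ⊢
        simp only [Nat.add_sub_cancel] at this ⊢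
        push_cast at this ⊢
        linarith [this]
      rw [Finset.sum_congr rfl this, Finset.sum_add_distrib]
      congr 1
      have : ∑ k ∈ Finset.Icc 1 N, (gq N k - gq N (k-1))
          = ∑ i ∈ Finset.range N, (gq N (i+1) - gq N i) := by
        rw [← Finset.Ico_add_one_right_eq_Icc, Finset.sum_Ico_eq_sum_range]
        exact Finset.sum_congr rfl fun i _ => by rw [Nat.add_comm 1 i, Nat.add_sub_cancel]
      rw [this, Finset.sum_range_sub]
    have hkey := key_s17 N
    have h0 := g_zero N
    simp only [fq] at hkey hfN1
    try simp only [Nat.add_sub_cancel] at hkey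
    try simp only [Nat.add_sub_cancel] at hfN1
    try simp only [Nat.add_sub_cancel]
    push_cast at hfN1 hkey h0 ih ⊢
    linarith [hfN1, hkey, h0, ih]
end

section
/- Define the rational sequence b_{m,k} for m,k ≥ 0 by b_{0,k} = 1 for all k ≥ 0, b_{m,0} = 0 for m ≥ 1, and b_{m,k} = ∑_{j=0}^m (-1)^j (j+1) b_{m-j,k-1} / k^j for m ≥ 0, k ≥ 1. Then b_{1,k} = -2*H_k(1), b_{2,k} = 3*H_k(1)^2 - 2*H_k(1,1), and b_{3,k} = 6*H_k(1)*H_k(1,1) - 2*H_k(1,1,1) - 4*H_k(1)^3 for all k ≥ 0. -/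
def b : ℕ → ℕ → ℚ
  | 0, _ => 1
  | _ + 1, 0 => 0
  | m + 1, k + 1 =>
      ∑ j ∈ Finset.range (m + 2), (-1 : ℚ) ^ j * (j + 1) / ((k : ℚ) + 1) ^ j * b (m + 1 - j) k
  termination_by m k => k

def H1 (k : ℕ) : ℚ := ∑ j ∈ Finset.Icc 1 k, 1 / (j : ℚ)

def H11 (k : ℕ) : ℚ :=
  ∑ j ∈ Finset.Icc 1 k, (∑ i ∈ Finset.Icc 1 (j - 1), 1 / (i : ℚ)) / (j : ℚ)

def H111 (k : ℕ) : ℚ :=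
  ∑ l ∈ Finset.Icc 1 k,
    (∑ j ∈ Finset.Icc 1 (l - 1), (∑ i ∈ Finset.Icc 1 (j - 1), 1 / (i : ℚ)) / (j : ℚ))
      / (l : ℚ)

lemma H1_succ (k : ℕ) : H1 (k + 1) = H1 k + 1 / ((k : ℚ) + 1) := by
  simp [H1, Finset.sum_Icc_succ_top (by omega : 1 ≤ k + 1)]

lemma H11_succ (k : ℕ) : H11 (k + 1) = H11 k + H1 k / ((k : ℚ) + 1) := by
  simp [H11, H1, Finset.sum_Icc_succ_top (by omega : 1 ≤ k + 1)]

lemma H111_succ (k : ℕ) : H111 (k + 1) = H111 k + H11 k / ((k : ℚ) + 1) := by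
  simp [H111, H11, Finset.sum_Icc_succ_top (by omega : 1 ≤ k + 1)]

lemma b1_succ (k : ℕ) : b 1 (k + 1) = b 1 k - 2 / ((k : ℚ) + 1) := by
  rw [show (1:ℕ) = 0 + 1 from rfl, b]
  simp [Finset.sum_range_succ, b]
  ring

lemma b2_succ (k : ℕ) :
    b 2 (k + 1) = b 2 k - 2 / ((k : ℚ) + 1) * b 1 k + 3 / ((k : ℚ) + 1) ^ 2 := by
  rw [show (2:ℕ) = 1 + 1 from rfl, b]
  simp [Finset.sum_range_succ, b]
  ring

lemma b3_succ (k : ℕ) :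
    b 3 (k + 1) = b 3 k - 2 / ((k : ℚ) + 1) * b 2 k + 3 / ((k : ℚ) + 1) ^ 2 * b 1 k
      - 4 / ((k : ℚ) + 1) ^ 3 := by
  rw [show (3:ℕ) = 2 + 1 from rfl, b]
  simp [Finset.sum_range_succ, b]
  ring

theorem stmt_19 (k : ℕ) :
    b 1 k = -2 * H1 k ∧
    b 2 k = 3 * (H1 k) ^ 2 - 2 * H11 k ∧
    b 3 k = 6 * H1 k * H11 k - 2 * H111 k - 4 * (H1 k) ^ 3 := by
  induction k with
  | zero => norm_num [b, H1, H11, H111]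
  | succ k ih =>
    obtain ⟨h1, h2, h3⟩ := ih
    have hk : ((k : ℚ) + 1) ≠ 0 := by positivity
    refine ⟨?_, ?_, ?_⟩
    · rw [b1_succ, H1_succ, h1]; ring
    · rw [b2_succ, H1_succ, H11_succ, h1, h2]; field_simp; ring
    · rw [b3_succ, H1_succ, H11_succ, H111_succ, h1, h2, h3]; field_simp; ring
end
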